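/- Let A = (Q, d, T_u, T_f, T_s, ∅) be an ordinary ABVASS, Q_ℓ a finite set of states, and T(A) the associated theory. Then for all configurations (q, v) ∈ Q × ℕ^d, the root judgement A, Q_ℓ ▷_ℓ q, v holds under the lossy semantics if and only if the sequent ⊢ θ(q, v), ?Q_ℓ is provable in LLW+T(A). -/

import Mathlib

/-- An alternating branching VASS with full zero tests (ABVASS₀):
states `Q`, counters indexed by `ι`, with unary, fork, split, and
full-zero-test rules. -/
structure ABVASS (Q ι : Type) where
  Tu : Set (Q × (ι → ℤ) × Q)
  Tf : Set (Q × Q × Q)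
  Ts : Set (Q × Q × Q)
  Tz : Set (Q × Q)

/-- Configurations: a state together with a vector of naturals. -/
abbrev Config (Q ι : Type) := Q × (ι → ℕ)

/-- Finite deduction trees labelled by configurations, with unary and
binary internal nodes. -/
inductive DTree (Q ι : Type) where
  | leaf : Config Q ι → DTree Q ι
  | node1 : Config Q ι → DTree Q ι → DTree Q ι
  | node2 : Config Q ι → DTree Q ι → DTree Q ι → DTree Q ι

namespace DTree

variable {Q ι : Type}

/-- The root label of a deduction tree. -/
def root : DTree Q ι → Config Q ι
  | .leaf c => c
  | .node1 c _ => c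
  | .node2 c _ _ => c

/-- Height: the maximum number of edges from the root to a leaf. -/
def height : DTree Q ι → ℕ
  | .leaf _ => 0
  | .node1 _ t => t.height + 1
  | .node2 _ t₁ t₂ => max t₁.height t₂.height + 1

/-- The list of leaf labels. -/
def leaves : DTree Q ι → List (Config Q ι)
  | .leaf c => [c]
  | .node1 _ t => t.leaves
  | .node2 _ t₁ t₂ => t₁.leaves ++ t₂.leaves

end DTree

variable {Q ι : Type}

/-- Unary rule, applied top-down: from `(q, v)` derive `(q₁, v + u)`,
provided `v + u` is non-negative. -/
def UnaryStep (A : ABVASS Q ι) (c c' : Config Q ι) : Prop :=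
  ∃ u, (c.1, u, c'.1) ∈ A.Tu ∧ ∀ i, (c'.2 i : ℤ) = (c.2 i : ℤ) + u i

/-- Full zero test: from `(q, 0)` derive `(q₁, 0)`. -/
def ZeroStep (A : ABVASS Q ι) (c c' : Config Q ι) : Prop :=
  (c.1, c'.1) ∈ A.Tz ∧ c.2 = (fun _ => 0) ∧ c'.2 = (fun _ => 0)

/-- Fork (children copy the parent's vector) or split (the parent's
vector is a sum of the children's). -/
def BinStep (A : ABVASS Q ι) (c c₁ c₂ : Config Q ι) : Prop :=
  ((c.1, c₁.1, c₂.1) ∈ A.Tf ∧ c₁.2 = c.2 ∧ c₂.2 = c.2) ∨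
  ((c.1, c₁.1, c₂.1) ∈ A.Ts ∧ c.2 = c₁.2 + c₂.2)

/-- A tree is a valid deduction tree when every internal node's children
are obtained by one of the permitted steps. -/
inductive ValidTree (step1 : Config Q ι → Config Q ι → Prop)
    (step2 : Config Q ι → Config Q ι → Config Q ι → Prop) : DTree Q ι → Prop
  | leaf (c : Config Q ι) : ValidTree step1 step2 (.leaf c)
  | one {c : Config Q ι} {t : DTree Q ι} :
      step1 c t.root → ValidTree step1 step2 t → ValidTree step1 step2 (.node1 c t)
  | two {c : Config Q ι} {t₁ t₂ : DTree Q ι} :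
      step2 c t₁.root t₂.root → ValidTree step1 step2 t₁ → ValidTree step1 step2 t₂ →
      ValidTree step1 step2 (.node2 c t₁ t₂)

/-- Deduction trees of an ABVASS₀ (standard semantics). -/
def IsDeduction (A : ABVASS Q ι) : DTree Q ι → Prop :=
  ValidTree (fun c c' => UnaryStep A c c' ∨ ZeroStep A c c') (BinStep A)

/-- Loss rule of the lossy semantics: from `(q, v)` derive `(q, v - e_i)`. -/
def LossStep (c c' : Config Q ι) : Prop :=
  c'.1 = c.1 ∧ ∃ i, c.2 i = c'.2 i + 1 ∧ ∀ j, j ≠ i → c.2 j = c'.2 j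

/-- Propositional linear logic formulas in negation normal form over
atoms `α`. -/
inductive Fm (α : Type) where
  | pos : α → Fm α
  | neg : α → Fm α
  | parr : Fm α → Fm α → Fm α
  | tensor : Fm α → Fm α → Fm α
  | bot : Fm α
  | one : Fm α
  | wth : Fm α → Fm α → Fm α
  | oplus : Fm α → Fm α → Fm α
  | top : Fm α
  | zero : Fm α
  | bang : Fm α → Fm α
  | quest : Fm α → Fm α

variable {α : Type}

/-- Negation, via the De Morgan dualities. -/
def Fm.dual : Fm α → Fm α
  | .pos a => .neg a
  | .neg a => .pos a
  | .parr f g => .tensor f.dual g.dual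
  | .tensor f g => .parr f.dual g.dual
  | .bot => .one
  | .one => .bot
  | .wth f g => .oplus f.dual g.dual
  | .oplus f g => .wth f.dual g.dual
  | .top => .zero
  | .zero => .top
  | .bang f => .quest f.dual
  | .quest f => .bang f.dual

/-- MALL formulas: no exponential connectives. -/
def Fm.noExp : Fm α → Prop
  | .pos _ => True
  | .neg _ => True
  | .parr f g => f.noExp ∧ g.noExp
  | .tensor f g => f.noExp ∧ g.noExp
  | .bot => True
  | .one => True
  | .wth f g => f.noExp ∧ g.noExp
  | .oplus f g => f.noExp ∧ g.noExp
  | .top => True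
  | .zero => True
  | .bang _ => False
  | .quest _ => False

/-- A theory axiom `C, p₁⊥, …, p_m⊥`: a formula `C` together with the
list of atoms `p₁, …, p_m`. -/
abbrev LAxiom (α : Type) := Fm α × List α

/-- The sequent `⊢ C, p₁⊥, …, p_m⊥` of an axiom. -/
def axSeq (t : LAxiom α) : Multiset (Fm α) :=
  t.1 ::ₘ (t.2.map Fm.neg : Multiset (Fm α))

/-- Provability in affine linear logic LLW (logical weakening replaced by
structural weakening) extended with a theory `T`: the rules of LLW, the
axiom rule, and the directed cut. -/
inductive LLWT (T : Set (LAxiom α)) : Multiset (Fm α) → Prop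
  | init (f : Fm α) : LLWT T {f, f.dual}
  | cut {Γ Δ : Multiset (Fm α)} (f : Fm α) :
      LLWT T (f ::ₘ Γ) → LLWT T (f.dual ::ₘ Δ) → LLWT T (Γ + Δ)
  | parr {Γ : Multiset (Fm α)} (f g : Fm α) :
      LLWT T (f ::ₘ g ::ₘ Γ) → LLWT T (.parr f g ::ₘ Γ)
  | tensor {Γ Δ : Multiset (Fm α)} (f g : Fm α) :
      LLWT T (f ::ₘ Γ) → LLWT T (g ::ₘ Δ) → LLWT T (.tensor f g ::ₘ (Γ + Δ))
  | bot {Γ : Multiset (Fm α)} : LLWT T Γ → LLWT T (.bot ::ₘ Γ)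
  | one : LLWT T {Fm.one}
  | wth {Γ : Multiset (Fm α)} (f g : Fm α) :
      LLWT T (f ::ₘ Γ) → LLWT T (g ::ₘ Γ) → LLWT T (.wth f g ::ₘ Γ)
  | oplus₁ {Γ : Multiset (Fm α)} (f g : Fm α) :
      LLWT T (f ::ₘ Γ) → LLWT T (.oplus f g ::ₘ Γ)
  | oplus₂ {Γ : Multiset (Fm α)} (f g : Fm α) :
      LLWT T (g ::ₘ Γ) → LLWT T (.oplus f g ::ₘ Γ)
  | top (Γ : Multiset (Fm α)) : LLWT T (.top ::ₘ Γ)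
  | qD {Γ : Multiset (Fm α)} (f : Fm α) :
      LLWT T (f ::ₘ Γ) → LLWT T (.quest f ::ₘ Γ)
  | weak {Γ : Multiset (Fm α)} (f : Fm α) :
      LLWT T Γ → LLWT T (f ::ₘ Γ)
  | qC {Γ : Multiset (Fm α)} (f : Fm α) :
      LLWT T (.quest f ::ₘ .quest f ::ₘ Γ) → LLWT T (.quest f ::ₘ Γ)
  | qP {Γ : Multiset (Fm α)} (f : Fm α) :
      (∀ g ∈ Γ, ∃ h, g = Fm.quest h) →
      LLWT T (f ::ₘ Γ) → LLWT T (.bang f ::ₘ Γ)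
  | ax {t : LAxiom α} : t ∈ T → LLWT T (axSeq t)
  | dcut {Δ : Multiset (Fm α)} {t : LAxiom α} :
      t ∈ T → LLWT T ((t.1).dual ::ₘ Δ) →
      LLWT T ((t.2.map Fm.neg : Multiset (Fm α)) + Δ)

/-- The unit vector `e_i` in dimension `d`. -/
def unit {d : ℕ} (i : Fin d) : Fin d → ℤ := fun j => if j = i then 1 else 0

/-- The sequent `θ(q, v) = q⊥, (e₁⊥)^{v 1}, …, (e_d⊥)^{v d}` encoding a
configuration, over the atoms `Q ⊕ Fin d`. -/
def theta {Q : Type} {d : ℕ} (q : Q) (v : Fin d → ℕ) :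
    Multiset (Fm (Q ⊕ Fin d)) :=
  Fm.neg (Sum.inl q) ::ₘ
    (Finset.univ : Finset (Fin d)).sum
      (fun i => Multiset.replicate (v i) (Fm.neg (Sum.inr i)))

/-- The theory `T(A)` associated with an ordinary ABVASS `A`: the axiom
`q⊥, q₁ ⊗ e_i` for each rule `q →^{+e_i} q₁`; the axiom `q⊥, e_i⊥, q₁`
for each rule `q →^{-e_i} q₁`; the axiom `q⊥, q₁ ⊕ q₂` for each fork
`q → q₁ ∧ q₂`; and the axiom `q⊥, q₁ ⅋ q₂` for each split `q → q₁ + q₂`. -/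
def thAx {Q : Type} {d : ℕ} (A : ABVASS Q (Fin d)) :
    Set (LAxiom (Q ⊕ Fin d)) :=
  {t | (∃ q i q₁, (q, unit i, q₁) ∈ A.Tu ∧
          t = (Fm.tensor (Fm.pos (Sum.inl q₁)) (Fm.pos (Sum.inr i)), [Sum.inl q])) ∨
       (∃ q i q₁, (q, -unit i, q₁) ∈ A.Tu ∧
          t = (Fm.pos (Sum.inl q₁), [Sum.inl q, Sum.inr i])) ∨
       (∃ q q₁ q₂, (q, q₁, q₂) ∈ A.Tf ∧
          t = (Fm.oplus (Fm.pos (Sum.inl q₁)) (Fm.pos (Sum.inl q₂)), [Sum.inl q])) ∨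
       (∃ q q₁ q₂, (q, q₁, q₂) ∈ A.Ts ∧
          t = (Fm.parr (Fm.pos (Sum.inl q₁)) (Fm.pos (Sum.inl q₂)), [Sum.inl q]))}

/-- An ABVASS is ordinary if every unary rule vector is `+e_i` or `-e_i`. -/
def Ordinary {Q : Type} {d : ℕ} (A : ABVASS Q (Fin d)) : Prop :=
  ∀ r ∈ A.Tu, ∃ i, r.2.1 = unit i ∨ r.2.1 = -unit i


namespace AbvProof
open Pointwise

section Basics

variable {Q : Type} {d : ℕ}

noncomputable local instance : DecidableEq Q := Classical.decEq _
noncomputable local instance : DecidableEq (Q ⊕ Fin d) := Classical.decEq _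

/-- counter multiset of atoms -/
def cntA (v : Fin d → ℕ) : Multiset (Q ⊕ Fin d) :=
  (Finset.univ : Finset (Fin d)).sum fun i => Multiset.replicate (v i) (Sum.inr i)

def cntF (v : Fin d → ℕ) : Multiset (Fm (Q ⊕ Fin d)) :=
  (Finset.univ : Finset (Fin d)).sum fun i => Multiset.replicate (v i) (Fm.neg (Sum.inr i))

lemma theta_eq (q : Q) (v : Fin d → ℕ) : theta q v = Fm.neg (Sum.inl q) ::ₘ cntF v := rfl

lemma map_finsetSum {β γ : Type*} (f : β → γ) (s : Finset (Fin d))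
    (g : Fin d → Multiset β) :
    (∑ i ∈ s, g i).map f = ∑ i ∈ s, (g i).map f := by
  induction s using Finset.cons_induction with
  | empty => simp
  | cons a s ha ih => rw [Finset.sum_cons, Finset.sum_cons, Multiset.map_add, ih]

lemma cntF_eq_map (v : Fin d → ℕ) :
    cntF (Q := Q) v = (cntA (Q := Q) v).map Fm.neg := by
  rw [cntA, cntF, map_finsetSum]
  exact Finset.sum_congr rfl fun i _ => by rw [Multiset.map_replicate]

lemma count_cntA_inr (v : Fin d → ℕ) (i : Fin d) :
    (cntA (Q := Q) v).count (Sum.inr i) = v i := by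
  rw [cntA, Multiset.count_sum']
  rw [Finset.sum_eq_single i]
  · simp [Multiset.count_replicate]
  · intro j _ hj
    simp [Multiset.count_replicate, hj, Ne.symm hj]
  · simp

lemma count_cntA_inl (v : Fin d → ℕ) (q : Q) :
    (cntA (Q := Q) v).count (Sum.inl q) = 0 := by
  rw [cntA, Multiset.count_sum']
  refine Finset.sum_eq_zero fun j _ => ?_
  simp [Multiset.count_replicate]

lemma cntA_ext_eq {m : Multiset (Q ⊕ Fin d)} (h : ∀ q : Q, m.count (Sum.inl q) = 0) :
    m = cntA (fun i => m.count (Sum.inr i)) := by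
  refine Multiset.ext.mpr fun a => ?_
  rcases a with q | i
  · rw [h q, count_cntA_inl]
  · rw [count_cntA_inr]

lemma cntA_pred {v : Fin d → ℕ} {i : Fin d} (hv : 0 < v i) :
    cntA (Q := Q) v = Sum.inr i ::ₘ cntA (fun j => if j = i then v j - 1 else v j) := by
  refine Multiset.ext.mpr fun a => ?_
  rw [Multiset.count_cons]
  rcases a with q | j
  · simp [count_cntA_inl]
  · rw [count_cntA_inr, count_cntA_inr]
    by_cases h : j = i
    · subst h; simp; omega
    · simp [h]

lemma cntA_succ (v : Fin d → ℕ) (i : Fin d) :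
    cntA (Q := Q) (fun j => if j = i then v j + 1 else v j) = Sum.inr i ::ₘ cntA v := by
  refine Multiset.ext.mpr fun a => ?_
  rw [Multiset.count_cons]
  rcases a with q | j
  · simp [count_cntA_inl]
  · rw [count_cntA_inr, count_cntA_inr]
    by_cases h : j = i
    · subst h; simp
    · simp [h]

lemma cntA_add (v w : Fin d → ℕ) :
    cntA (Q := Q) (fun i => v i + w i) = cntA v + cntA w := by
  rw [cntA, cntA, cntA, ← Finset.sum_add_distrib]
  exact Finset.sum_congr rfl fun i _ => Multiset.replicate_add _ _ _

lemma cntF_pred {v : Fin d → ℕ} {i : Fin d} (hv : 0 < v i) :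
    cntF (Q := Q) v
      = Fm.neg (Sum.inr i) ::ₘ cntF (fun j => if j = i then v j - 1 else v j) := by
  rw [cntF_eq_map, cntF_eq_map, cntA_pred hv, Multiset.map_cons]

lemma cntF_succ (v : Fin d → ℕ) (i : Fin d) :
    cntF (Q := Q) (fun j => if j = i then v j + 1 else v j)
      = Fm.neg (Sum.inr i) ::ₘ cntF v := by
  rw [cntF_eq_map, cntF_eq_map, cntA_succ, Multiset.map_cons]

lemma cntF_add (v w : Fin d → ℕ) :
    cntF (Q := Q) (fun i => v i + w i) = cntF v + cntF w := by
  rw [cntF_eq_map, cntF_eq_map, cntF_eq_map, cntA_add, Multiset.map_add]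

/-- The semantic counterpart: derivability of atom multisets. -/
inductive Der (A : ABVASS Q (Fin d)) (L : Finset Q) : Multiset (Q ⊕ Fin d) → Prop
  | base {q : Q} : q ∈ L → Der A L {Sum.inl q}
  | weak (x) {m} : Der A L m → Der A L (x ::ₘ m)
  | plusE {q : Q} {i : Fin d} {q₁ : Q} {m} : (q, unit i, q₁) ∈ A.Tu →
      Der A L (Sum.inl q₁ ::ₘ Sum.inr i ::ₘ m) → Der A L (Sum.inl q ::ₘ m)
  | minusE {q : Q} {i : Fin d} {q₁ : Q} {m} : (q, -unit i, q₁) ∈ A.Tu →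
      Der A L (Sum.inl q₁ ::ₘ m) → Der A L (Sum.inl q ::ₘ Sum.inr i ::ₘ m)
  | fork {q q₁ q₂ : Q} {m} : (q, q₁, q₂) ∈ A.Tf →
      Der A L (Sum.inl q₁ ::ₘ m) → Der A L (Sum.inl q₂ ::ₘ m) → Der A L (Sum.inl q ::ₘ m)
  | split {q q₁ q₂ : Q} {m₁ m₂} : (q, q₁, q₂) ∈ A.Ts →
      Der A L (Sum.inl q₁ ::ₘ m₁) → Der A L (Sum.inl q₂ ::ₘ m₂) →
      Der A L (Sum.inl q ::ₘ (m₁ + m₂))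

variable (A : ABVASS Q (Fin d)) (L : Finset Q)

lemma Der.weakAdd (x : Multiset (Q ⊕ Fin d)) {m} (h : Der A L m) : Der A L (x + m) := by
  induction x using Multiset.induction with
  | empty => simpa
  | cons a s ih => rw [Multiset.cons_add]; exact ih.weak a

/-- orthogonal of a set of atom multisets -/
def og (X : Set (Multiset (Q ⊕ Fin d))) : Set (Multiset (Q ⊕ Fin d)) :=
  {m | ∀ x ∈ X, Der A L (m + x)}

lemma og_anti {X Y : Set (Multiset (Q ⊕ Fin d))} (h : X ⊆ Y) : og A L Y ⊆ og A L X :=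
  fun m hm x hx => hm x (h hx)

lemma subset_og_og (X : Set (Multiset (Q ⊕ Fin d))) : X ⊆ og A L (og A L X) :=
  fun m hm x hx => by rw [add_comm]; exact hx m hm

lemma og_triple (X : Set (Multiset (Q ⊕ Fin d))) :
    og A L (og A L (og A L X)) = og A L X :=
  le_antisymm (og_anti A L (subset_og_og A L X)) (subset_og_og A L (og A L X))

lemma add_og_og {X Y : Set (Multiset (Q ⊕ Fin d))} :
    og A L (og A L X) + og A L (og A L Y) ⊆ og A L (og A L (X + Y)) := by
  rintro - ⟨u, hu, v, hv, rfl⟩ w hw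
  have h1 : ∀ y ∈ Y, Der A L (u + y + w) := by
    intro y hy
    have hyw : y + w ∈ og A L X := by
      intro x hx
      have := hw (x + y) ⟨x, hx, y, hy, rfl⟩
      rw [show w + (x + y) = y + w + x by abel] at this
      exact this
    have := hu _ hyw
    rw [show u + (y + w) = u + y + w by abel] at this
    exact this
  have h2 : u + w ∈ og A L Y := by
    intro y hy
    rw [show u + w + y = u + y + w by abel]
    exact h1 y hy
  have := hv _ h2
  rw [show v + (u + w) = u + v + w by abel] at this
  exact this

lemma og_og_add (X Y : Set (Multiset (Q ⊕ Fin d))) :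
    og A L (og A L (og A L X) + og A L (og A L Y)) = og A L (X + Y) := by
  refine le_antisymm (og_anti A L ?_) ?_
  · rintro - ⟨x, hx, y, hy, rfl⟩
    exact ⟨x, subset_og_og A L X hx, y, subset_og_og A L Y hy, rfl⟩
  · intro m hm z hz
    have hz' : z ∈ og A L (og A L (X + Y)) := add_og_og A L hz
    rw [add_comm]
    exact hz' m hm

lemma og_og_union (X Y : Set (Multiset (Q ⊕ Fin d))) :
    og A L (og A L (og A L X) ∪ og A L (og A L Y)) = og A L (X ∪ Y) := by
  refine le_antisymm (og_anti A L ?_) ?_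
  · rintro x (hx | hx)
    · exact Set.mem_union_left _ (subset_og_og A L X hx)
    · exact Set.mem_union_right _ (subset_og_og A L Y hx)
  · intro m hm z hz
    rcases hz with hz | hz
    · rw [add_comm]
      exact hz m fun x hx => hm x (Set.mem_union_left _ hx)
    · rw [add_comm]
      exact hz m fun x hx => hm x (Set.mem_union_right _ hx)

end Basics



theorem Fm.dual_dual {α : Type} (f : Fm α) : f.dual.dual = f := by
  induction f <;> simp [Fm.dual, *]

section Phase

variable {Q : Type} {d : ℕ} (A : ABVASS Q (Fin d)) (L : Finset Q)

/-- phase-semantic interpretation of formulas -/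
def interp : Fm (Q ⊕ Fin d) → Set (Multiset (Q ⊕ Fin d))
  | .pos a => og A L (og A L {({a} : Multiset (Q ⊕ Fin d))})
  | .neg a => og A L {({a} : Multiset (Q ⊕ Fin d))}
  | .tensor f g => og A L (og A L (interp f + interp g))
  | .parr f g => og A L (og A L (interp f) + og A L (interp g))
  | .one => og A L (og A L {(0 : Multiset (Q ⊕ Fin d))})
  | .bot => og A L {(0 : Multiset (Q ⊕ Fin d))}
  | .oplus f g => og A L (og A L (interp f ∪ interp g))
  | .wth f g => og A L (og A L (interp f) ∪ og A L (interp g))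
  | .zero => og A L (og A L ∅)
  | .top => og A L ∅
  | .bang f => og A L (og A L ({0} ∩ interp f))
  | .quest f => og A L ({0} ∩ og A L (interp f))

lemma interp_fact (f : Fm (Q ⊕ Fin d)) :
    og A L (og A L (interp A L f)) = interp A L f := by
  cases f <;> simp only [interp] <;> exact og_triple A L _

lemma dual_interp (f : Fm (Q ⊕ Fin d)) :
    interp A L f.dual = og A L (interp A L f) := by
  induction f with
  | pos a => simp only [Fm.dual, interp, og_triple]
  | neg a => simp only [Fm.dual, interp]
  | tensor f g ihf ihg =>
      simp only [Fm.dual, interp, ihf, ihg, og_og_add, og_triple]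
  | parr f g ihf ihg =>
      simp only [Fm.dual, interp, ihf, ihg]
  | one => simp only [Fm.dual, interp, og_triple]
  | bot => simp only [Fm.dual, interp]
  | oplus f g ihf ihg =>
      simp only [Fm.dual, interp, ihf, ihg, og_og_union, og_triple]
  | wth f g ihf ihg =>
      simp only [Fm.dual, interp, ihf, ihg]
  | top => simp only [Fm.dual, interp]
  | zero => simp only [Fm.dual, interp, og_triple]
  | bang f ihf =>
      simp only [Fm.dual, interp, ihf, interp_fact, og_triple]
  | quest f ihf =>
      simp only [Fm.dual, interp, ihf]

open Pointwise

/-- interpretation of a sequent -/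
def sint (Γ : Multiset (Fm (Q ⊕ Fin d))) : Set (Multiset (Q ⊕ Fin d)) :=
  (Γ.map fun f => interp A L f.dual).sum

lemma sint_zero : sint A L 0 = 0 := by simp [sint]

lemma sint_cons (f : Fm (Q ⊕ Fin d)) (Γ : Multiset (Fm (Q ⊕ Fin d))) :
    sint A L (f ::ₘ Γ) = interp A L f.dual + sint A L Γ := by
  simp [sint]

lemma sint_add (Γ Δ : Multiset (Fm (Q ⊕ Fin d))) :
    sint A L (Γ + Δ) = sint A L Γ + sint A L Δ := by
  simp [sint]

lemma og_og_le {Z W : Set (Multiset (Q ⊕ Fin d))} (h : Z ⊆ og A L W) :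
    og A L (og A L Z) ⊆ og A L W := by
  rw [← og_triple A L W]
  exact og_anti A L (og_anti A L h)

lemma mem_og_sint {Γ : Multiset (Fm (Q ⊕ Fin d))} {u f}
    (ih : ∀ m ∈ sint A L (f ::ₘ Γ), Der A L m) (hu : u ∈ sint A L Γ) :
    u ∈ og A L (interp A L f.dual) := by
  intro x hx
  rw [add_comm]
  refine ih (x + u) ?_
  rw [sint_cons]
  exact ⟨x, hx, u, hu, rfl⟩

lemma absorb {s n m : Multiset (Q ⊕ Fin d)}
    (hn : n ∈ og A L (og A L {s})) (h : Der A L (m + s)) : Der A L (m + n) := by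
  rw [add_comm]
  refine hn m fun x hx => ?_
  rw [Set.mem_singleton_iff] at hx
  subst hx
  exact h

lemma og_empty : og A L (∅ : Set (Multiset (Q ⊕ Fin d))) = Set.univ := by
  ext m; simp [og]

lemma mem_og_univ_add {u : Multiset (Q ⊕ Fin d)}
    (hu : u ∈ og A L Set.univ) (x : Multiset (Q ⊕ Fin d)) :
    x + u ∈ og A L Set.univ := by
  intro z hz
  have := hu (x + z) trivial
  rw [show u + (x + z) = x + u + z by abel] at this
  exact this

/-- decomposition of elements of the interpretation of an all-quest context -/
lemma sint_quests {Γ : Multiset (Fm (Q ⊕ Fin d))}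
    (hq : ∀ g ∈ Γ, ∃ h, g = Fm.quest h) :
    ∀ u ∈ sint A L Γ, u ∈ og A L Set.univ ∨
      ((0 : Multiset (Q ⊕ Fin d)) ∈ sint A L Γ ∧
        u ∈ og A L (og A L {(0 : Multiset (Q ⊕ Fin d))})) := by
  induction Γ using Multiset.induction with
  | empty =>
      intro u hu
      rw [sint_zero] at hu
      rw [Set.mem_zero] at hu
      subst hu
      right
      refine ⟨by rw [sint_zero]; exact rfl, subset_og_og A L _ rfl⟩
  | cons g Γ' ihΓ =>
      intro u hu
      rw [sint_cons] at hu
      obtain ⟨x, hx, u', hu', rfl⟩ := Set.mem_add.mp hu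
      obtain ⟨h, rfl⟩ := hq g (Multiset.mem_cons_self g Γ')
      have hq' : ∀ g ∈ Γ', ∃ h, g = Fm.quest h := fun g hg => hq g (Multiset.mem_cons_of_mem hg)
      have hx' : x ∈ og A L (og A L ({0} ∩ interp A L h.dual)) := by
        simpa only [Fm.dual, interp] using hx
      rcases ihΓ hq' u' hu' with hu'' | ⟨h0, hu''⟩
      · left
        exact mem_og_univ_add A L hu'' x
      · by_cases h0f : (0 : Multiset (Q ⊕ Fin d)) ∈ interp A L h.dual
        · right
          constructor
          · rw [sint_cons]
            refine ⟨0, ?_, 0, h0, by simp⟩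
            simp only [Fm.dual, interp]
            exact subset_og_og A L _ ⟨rfl, h0f⟩
          · have hsub : ({0} ∩ interp A L h.dual : Set (Multiset (Q ⊕ Fin d)))
                ⊆ {(0 : Multiset (Q ⊕ Fin d))} := Set.inter_subset_left
            have hx2 : x ∈ og A L (og A L {(0 : Multiset (Q ⊕ Fin d))}) :=
              og_anti A L (og_anti A L hsub) hx'
            intro z hz
            have h1 := hu'' z hz
            have h2 : u' + z ∈ og A L {(0 : Multiset (Q ⊕ Fin d))} := by
              intro w hw
              rw [Set.mem_singleton_iff] at hw; subst hw
              simpa using h1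
            have := hx2 _ h2
            rw [show x + (u' + z) = x + u' + z by abel] at this
            exact this
        · left
          have hemp : ({0} ∩ interp A L h.dual : Set (Multiset (Q ⊕ Fin d))) ⊆ ∅ := by
            rintro z ⟨hz1, hz2⟩
            rw [Set.mem_singleton_iff] at hz1; subst hz1
            exact absurd hz2 h0f
          have hx2 : x ∈ og A L (og A L (∅ : Set (Multiset (Q ⊕ Fin d)))) :=
            og_anti A L (og_anti A L hemp) hx'
          rw [og_empty] at hx2
          rw [add_comm]
          exact mem_og_univ_add A L hx2 u'

lemma add_sing {α : Type*} (s : Multiset α) (a : α) : s + {a} = a ::ₘ s := by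
  rw [add_comm, Multiset.singleton_add]

lemma add_pair {α : Type*} (s : Multiset α) (a b : α) :
    s + ({a} + {b}) = a ::ₘ b ::ₘ s := by
  rw [Multiset.singleton_add, Multiset.add_cons, add_sing, Multiset.cons_swap]

theorem soundness {Γ : Multiset (Fm (Q ⊕ Fin d))} (h : LLWT (thAx A) Γ) :
    ∀ m ∈ sint A L Γ, Der A L m := by
  induction h with
  | init f =>
      intro m hm
      rw [show ({f, f.dual} : Multiset (Fm (Q ⊕ Fin d))) = f ::ₘ f.dual ::ₘ 0 from rfl,
        sint_cons, sint_cons, sint_zero] at hm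
      obtain ⟨x, hx, u, hu, rfl⟩ := Set.mem_add.mp hm
      obtain ⟨y, hy, z, hz, rfl⟩ := Set.mem_add.mp hu
      rw [Set.mem_zero] at hz; subst hz
      rw [Fm.dual_dual] at hy
      rw [dual_interp] at hx
      have := hx y hy
      rw [show x + (y + 0) = x + y by abel]
      exact this
  | cut f h1 h2 ih1 ih2 =>
      intro m hm
      rw [sint_add] at hm
      obtain ⟨u, hu, w, hw, rfl⟩ := Set.mem_add.mp hm
      have hu' : u ∈ og A L (interp A L f.dual) := mem_og_sint A L ih1 hu
      have hw' := mem_og_sint A L ih2 hw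
      rw [Fm.dual_dual] at hw'
      rw [dual_interp] at hu'
      exact hu' w hw'
  | @parr Γc f g h ih =>
      intro m hm
      rw [sint_cons] at hm
      obtain ⟨x, hx, u, hu, rfl⟩ := Set.mem_add.mp hm
      have hx' : x ∈ og A L (og A L (interp A L f.dual + interp A L g.dual)) := by
        simpa only [Fm.dual, interp] using hx
      have hZ : interp A L f.dual + interp A L g.dual ⊆ og A L {u} := by
        rintro - ⟨a, ha, b, hb, rfl⟩ w hw
        rw [Set.mem_singleton_iff] at hw
        rw [hw]
        have hmem : a + (b + u) ∈ sint A L (f ::ₘ g ::ₘ Γc) := by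
          rw [sint_cons, sint_cons]
          exact ⟨a, ha, b + u, ⟨b, hb, u, hu, rfl⟩, rfl⟩
        have := ih _ hmem
        rw [show a + b + u = a + (b + u) by abel]
        exact this
      exact og_og_le A L hZ hx' u rfl
  | tensor f g h1 h2 ih1 ih2 =>
      intro m hm
      rw [sint_cons, sint_add] at hm
      obtain ⟨x, hx, u, hu, rfl⟩ := Set.mem_add.mp hm
      obtain ⟨u₁, hu₁, u₂, hu₂, rfl⟩ := Set.mem_add.mp hu
      have h1' := mem_og_sint A L ih1 hu₁
      have h2' := mem_og_sint A L ih2 hu₂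
      have hx' : x ∈ og A L (og A L (interp A L f.dual) + og A L (interp A L g.dual)) := by
        simpa only [Fm.dual, interp] using hx
      exact hx' (u₁ + u₂) ⟨u₁, h1', u₂, h2', rfl⟩
  | bot h ih =>
      intro m hm
      rw [sint_cons] at hm
      obtain ⟨x, hx, u, hu, rfl⟩ := Set.mem_add.mp hm
      have hx' : x ∈ og A L (og A L {(0 : Multiset (Q ⊕ Fin d))}) := by
        simpa only [Fm.dual, interp] using hx
      have hZ : ({(0 : Multiset (Q ⊕ Fin d))} : Set _) ⊆ og A L {u} := by
        rintro z hz w hw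
        rw [Set.mem_singleton_iff] at hz hw; subst hz
        rw [hw]
        simpa using ih u hu
      exact og_og_le A L hZ hx' u rfl
  | one =>
      intro m hm
      rw [show ({Fm.one} : Multiset (Fm (Q ⊕ Fin d))) = Fm.one ::ₘ 0 from rfl,
        sint_cons, sint_zero] at hm
      obtain ⟨x, hx, u, hu, rfl⟩ := Set.mem_add.mp hm
      rw [Set.mem_zero] at hu; subst hu
      have hx' : x ∈ og A L {(0 : Multiset (Q ⊕ Fin d))} := by
        simpa only [Fm.dual, interp] using hx
      exact hx' 0 rfl
  | wth f g h1 h2 ih1 ih2 =>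
      intro m hm
      rw [sint_cons] at hm
      obtain ⟨x, hx, u, hu, rfl⟩ := Set.mem_add.mp hm
      have hx' : x ∈ og A L (og A L (interp A L f.dual ∪ interp A L g.dual)) := by
        simpa only [Fm.dual, interp] using hx
      have hZ : interp A L f.dual ∪ interp A L g.dual ⊆ og A L {u} := by
        rintro z (hz | hz) w hw <;> rw [Set.mem_singleton_iff] at hw <;>
          rw [hw, add_comm]
        · exact mem_og_sint A L ih1 hu z hz
        · exact mem_og_sint A L ih2 hu z hz
      exact og_og_le A L hZ hx' u rfl
  | oplus₁ f g h ih =>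
      intro m hm
      rw [sint_cons] at hm
      obtain ⟨x, hx, u, hu, rfl⟩ := Set.mem_add.mp hm
      have hx' : x ∈ og A L (og A L (interp A L f.dual) ∪ og A L (interp A L g.dual)) := by
        simpa only [Fm.dual, interp] using hx
      exact hx' u (Set.mem_union_left _ (mem_og_sint A L ih hu))
  | oplus₂ f g h ih =>
      intro m hm
      rw [sint_cons] at hm
      obtain ⟨x, hx, u, hu, rfl⟩ := Set.mem_add.mp hm
      have hx' : x ∈ og A L (og A L (interp A L f.dual) ∪ og A L (interp A L g.dual)) := by
        simpa only [Fm.dual, interp] using hx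
      exact hx' u (Set.mem_union_right _ (mem_og_sint A L ih hu))
  | top Γ =>
      intro m hm
      rw [sint_cons] at hm
      obtain ⟨x, hx, u, hu, rfl⟩ := Set.mem_add.mp hm
      have hx' : x ∈ og A L (og A L (∅ : Set (Multiset (Q ⊕ Fin d)))) := by
        simpa only [Fm.dual, interp] using hx
      exact hx' u (fun y hy => absurd hy (Set.notMem_empty y))
  | qD f h ih =>
      intro m hm
      rw [sint_cons] at hm
      obtain ⟨x, hx, u, hu, rfl⟩ := Set.mem_add.mp hm
      have hx' : x ∈ og A L (og A L ({0} ∩ interp A L f.dual)) := by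
        simpa only [Fm.dual, interp] using hx
      have hZ : ({0} ∩ interp A L f.dual : Set _) ⊆ og A L {u} := by
        rintro z ⟨hz0, hzf⟩ w hw
        rw [Set.mem_singleton_iff] at hw
        rw [hw, add_comm]
        exact mem_og_sint A L ih hu z hzf
      exact og_og_le A L hZ hx' u rfl
  | weak f h ih =>
      intro m hm
      rw [sint_cons] at hm
      obtain ⟨x, hx, u, hu, rfl⟩ := Set.mem_add.mp hm
      exact Der.weakAdd A L x (ih u hu)
  | @qC Γc f h ih =>
      intro m hm
      rw [sint_cons] at hm
      obtain ⟨x, hx, u, hu, rfl⟩ := Set.mem_add.mp hm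
      have hx' : x ∈ og A L (og A L ({0} ∩ interp A L f.dual)) := by
        simpa only [Fm.dual, interp] using hx
      have hZ : ({0} ∩ interp A L f.dual : Set _) ⊆ og A L {u} := by
        rintro z ⟨hz0, hzf⟩ w hw
        rw [Set.mem_singleton_iff] at hz0 hw; subst hz0
        rw [hw]
        have h0 : (0 : Multiset (Q ⊕ Fin d)) ∈ interp A L (Fm.quest f).dual := by
          simp only [Fm.dual, interp]
          exact subset_og_og A L _ ⟨rfl, hzf⟩
        have hmem : (0 : Multiset (Q ⊕ Fin d)) + (0 + u)
            ∈ sint A L (Fm.quest f ::ₘ Fm.quest f ::ₘ Γc) := by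
          rw [sint_cons, sint_cons]
          exact ⟨0, h0, 0 + u, ⟨0, h0, u, hu, rfl⟩, rfl⟩
        have := ih _ hmem
        simpa using this
      exact og_og_le A L hZ hx' u rfl
  | qP f hq h ih =>
      intro m hm
      rw [sint_cons] at hm
      obtain ⟨x, hx, u, hu, rfl⟩ := Set.mem_add.mp hm
      have hx' : x ∈ og A L ({0} ∩ og A L (interp A L f.dual)) := by
        simpa only [Fm.dual, interp] using hx
      rcases sint_quests A L hq u hu with hu' | ⟨h0, hu'⟩
      · rw [add_comm]
        exact hu' x trivial
      · have h0og : (0 : Multiset (Q ⊕ Fin d)) ∈ og A L (interp A L f.dual) :=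
          mem_og_sint A L ih h0
        have hsub : ({(0 : Multiset (Q ⊕ Fin d))} : Set _)
            ⊆ {0} ∩ og A L (interp A L f.dual) := by
          rintro z hz
          rw [Set.mem_singleton_iff] at hz; subst hz
          exact ⟨rfl, h0og⟩
        have hx2 : x ∈ og A L {(0 : Multiset (Q ⊕ Fin d))} := og_anti A L hsub hx'
        rw [add_comm]
        exact hu' x hx2
  | ax ht =>
      intro m hm
      simp only [thAx, Set.mem_setOf_eq] at ht
      rcases ht with ⟨q, i, q₁, hTu, rfl⟩ | ⟨q, i, q₁, hTu, rfl⟩ |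
        ⟨q, q₁, q₂, hT, rfl⟩ | ⟨q, q₁, q₂, hT, rfl⟩
      · -- +e axiom
        rw [show axSeq (Fm.tensor (Fm.pos (Sum.inl q₁)) (Fm.pos (Sum.inr i)),
              ([Sum.inl q] : List (Q ⊕ Fin d)))
            = Fm.tensor (Fm.pos (Sum.inl q₁)) (Fm.pos (Sum.inr i)) ::ₘ
              Fm.neg (Sum.inl q) ::ₘ 0 from rfl,
          sint_cons, sint_cons, sint_zero] at hm
        obtain ⟨x, hx, u, hu, rfl⟩ := Set.mem_add.mp hm
        obtain ⟨n, hn, z, hz, rfl⟩ := Set.mem_add.mp hu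
        rw [Set.mem_zero] at hz; subst hz
        have hx' : x ∈ og A L (og A L (og A L {({Sum.inl q₁} : Multiset (Q ⊕ Fin d))})
            + og A L (og A L {({Sum.inr i} : Multiset (Q ⊕ Fin d))})) := by
          simpa only [Fm.dual, interp] using hx
        have hn' : n ∈ og A L (og A L {({Sum.inl q} : Multiset (Q ⊕ Fin d))}) := by
          simpa only [Fm.dual, interp] using hn
        have hD : Der A L (x + ({Sum.inl q₁} + {Sum.inr i})) :=
          hx' _ ⟨_, subset_og_og A L _ rfl, _, subset_og_og A L _ rfl, rfl⟩
        rw [add_pair] at hD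
        have hD3 : Der A L (x + {Sum.inl q}) := by
          rw [add_sing]
          exact Der.plusE hTu hD
        have := absorb A L hn' hD3
        rw [show x + (n + 0) = x + n by abel]
        exact this
      · -- -e axiom
        rw [show axSeq (Fm.pos (Sum.inl q₁), ([Sum.inl q, Sum.inr i] : List (Q ⊕ Fin d)))
            = Fm.pos (Sum.inl q₁) ::ₘ Fm.neg (Sum.inl q) ::ₘ Fm.neg (Sum.inr i) ::ₘ 0 from rfl,
          sint_cons, sint_cons, sint_cons, sint_zero] at hm
        obtain ⟨x, hx, u, hu, rfl⟩ := Set.mem_add.mp hm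
        obtain ⟨n₁, hn₁, u', hu', rfl⟩ := Set.mem_add.mp hu
        obtain ⟨n₂, hn₂, z, hz, rfl⟩ := Set.mem_add.mp hu'
        rw [Set.mem_zero] at hz; subst hz
        have hx' : x ∈ og A L {({Sum.inl q₁} : Multiset (Q ⊕ Fin d))} := by
          simpa only [Fm.dual, interp] using hx
        have hn₁' : n₁ ∈ og A L (og A L {({Sum.inl q} : Multiset (Q ⊕ Fin d))}) := by
          simpa only [Fm.dual, interp] using hn₁
        have hn₂' : n₂ ∈ og A L (og A L {({Sum.inr i} : Multiset (Q ⊕ Fin d))}) := by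
          simpa only [Fm.dual, interp] using hn₂
        have hD : Der A L (Sum.inl q₁ ::ₘ x) := by
          rw [← add_sing]; exact hx' _ rfl
        have hD2 : Der A L (Sum.inl q ::ₘ Sum.inr i ::ₘ x) := Der.minusE hTu hD
        have hD3 : Der A L ((Sum.inl q ::ₘ x) + n₂) := by
          refine absorb A L hn₂' ?_
          rw [add_sing, Multiset.cons_swap]
          exact hD2
        have hD4 : Der A L ((x + n₂) + n₁) := by
          refine absorb A L hn₁' ?_
          rw [add_sing]
          rw [show Sum.inl q ::ₘ (x + n₂) = (Sum.inl q ::ₘ x) + n₂ from (Multiset.cons_add _ _ _).symm]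
          exact hD3
        rw [show x + (n₁ + (n₂ + 0)) = (x + n₂) + n₁ by abel]
        exact hD4
      · -- fork axiom
        rw [show axSeq (Fm.oplus (Fm.pos (Sum.inl q₁)) (Fm.pos (Sum.inl q₂)),
              ([Sum.inl q] : List (Q ⊕ Fin d)))
            = Fm.oplus (Fm.pos (Sum.inl q₁)) (Fm.pos (Sum.inl q₂)) ::ₘ
              Fm.neg (Sum.inl q) ::ₘ 0 from rfl,
          sint_cons, sint_cons, sint_zero] at hm
        obtain ⟨x, hx, u, hu, rfl⟩ := Set.mem_add.mp hm
        obtain ⟨n, hn, z, hz, rfl⟩ := Set.mem_add.mp hu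
        rw [Set.mem_zero] at hz; subst hz
        have hx' : x ∈ og A L (og A L (og A L {({Sum.inl q₁} : Multiset (Q ⊕ Fin d))})
            ∪ og A L (og A L {({Sum.inl q₂} : Multiset (Q ⊕ Fin d))})) := by
          simpa only [Fm.dual, interp] using hx
        have hn' : n ∈ og A L (og A L {({Sum.inl q} : Multiset (Q ⊕ Fin d))}) := by
          simpa only [Fm.dual, interp] using hn
        have hD1 : Der A L (Sum.inl q₁ ::ₘ x) := by
          rw [← add_sing]
          exact hx' _ (Set.mem_union_left _ (subset_og_og A L _ rfl))
        have hD2 : Der A L (Sum.inl q₂ ::ₘ x) := by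
          rw [← add_sing]
          exact hx' _ (Set.mem_union_right _ (subset_og_og A L _ rfl))
        have hD3 : Der A L (x + {Sum.inl q}) := by
          rw [add_sing]
          exact Der.fork hT hD1 hD2
        have := absorb A L hn' hD3
        rw [show x + (n + 0) = x + n by abel]
        exact this
      · -- split axiom
        rw [show axSeq (Fm.parr (Fm.pos (Sum.inl q₁)) (Fm.pos (Sum.inl q₂)),
              ([Sum.inl q] : List (Q ⊕ Fin d)))
            = Fm.parr (Fm.pos (Sum.inl q₁)) (Fm.pos (Sum.inl q₂)) ::ₘ
              Fm.neg (Sum.inl q) ::ₘ 0 from rfl,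
          sint_cons, sint_cons, sint_zero] at hm
        obtain ⟨x, hx, u, hu, rfl⟩ := Set.mem_add.mp hm
        obtain ⟨n, hn, z, hz, rfl⟩ := Set.mem_add.mp hu
        rw [Set.mem_zero] at hz; subst hz
        have hx' : x ∈ og A L (og A L (og A L {({Sum.inl q₁} : Multiset (Q ⊕ Fin d))}
            + og A L {({Sum.inl q₂} : Multiset (Q ⊕ Fin d))})) := by
          simpa only [Fm.dual, interp] using hx
        have hn' : n ∈ og A L (og A L {({Sum.inl q} : Multiset (Q ⊕ Fin d))}) := by
          simpa only [Fm.dual, interp] using hn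
        have hZ : og A L {({Sum.inl q₁} : Multiset (Q ⊕ Fin d))}
            + og A L {({Sum.inl q₂} : Multiset (Q ⊕ Fin d))}
            ⊆ og A L {({Sum.inl q} : Multiset (Q ⊕ Fin d))} := by
          rintro - ⟨a, ha, b, hb, rfl⟩ w hw
          rw [Set.mem_singleton_iff] at hw; subst hw
          have h1 : Der A L (Sum.inl q₁ ::ₘ a) := by rw [← add_sing]; exact ha _ rfl
          have h2 : Der A L (Sum.inl q₂ ::ₘ b) := by rw [← add_sing]; exact hb _ rfl
          rw [add_sing]
          exact Der.split hT h1 h2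
        have hx2 : x ∈ og A L {({Sum.inl q} : Multiset (Q ⊕ Fin d))} := og_og_le A L hZ hx'
        have := absorb A L hn' (hx2 _ rfl)
        rw [show x + (n + 0) = x + n by abel]
        exact this
  | dcut ht hprem ih =>
      intro m hm
      simp only [thAx, Set.mem_setOf_eq] at ht
      rcases ht with ⟨q, i, q₁, hTu, rfl⟩ | ⟨q, i, q₁, hTu, rfl⟩ |
        ⟨q, q₁, q₂, hT, rfl⟩ | ⟨q, q₁, q₂, hT, rfl⟩
      · -- +e
        rw [show ((([Sum.inl q] : List (Q ⊕ Fin d)).map Fm.neg : Multiset (Fm (Q ⊕ Fin d))))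
            = {Fm.neg (Sum.inl q)} from rfl, Multiset.singleton_add, sint_cons] at hm
        obtain ⟨n, hn, u, hu, rfl⟩ := Set.mem_add.mp hm
        have hn' : n ∈ og A L (og A L {({Sum.inl q} : Multiset (Q ⊕ Fin d))}) := by
          simpa only [Fm.dual, interp] using hn
        have hu' := mem_og_sint A L ih hu
        rw [Fm.dual_dual] at hu'
        have hkey : ({Sum.inl q₁} : Multiset (Q ⊕ Fin d)) + {Sum.inr i}
            ∈ interp A L (Fm.tensor (Fm.pos (Sum.inl q₁)) (Fm.pos (Sum.inr i))) := by
          simp only [interp]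
          exact subset_og_og A L _ ⟨_, subset_og_og A L _ rfl, _, subset_og_og A L _ rfl, rfl⟩
        have hD : Der A L (u + ({Sum.inl q₁} + {Sum.inr i})) := hu' _ hkey
        rw [add_pair] at hD
        have hD2 : Der A L (u + {Sum.inl q}) := by
          rw [add_sing]
          exact Der.plusE hTu hD
        have := absorb A L hn' hD2
        rw [add_comm]
        exact this
      · -- -e
        rw [show ((([Sum.inl q, Sum.inr i] : List (Q ⊕ Fin d)).map Fm.neg
              : Multiset (Fm (Q ⊕ Fin d))))
            = Fm.neg (Sum.inl q) ::ₘ {Fm.neg (Sum.inr i)} from rfl,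
          Multiset.cons_add, Multiset.singleton_add, sint_cons, sint_cons] at hm
        obtain ⟨n₁, hn₁, u1, hu1, rfl⟩ := Set.mem_add.mp hm
        obtain ⟨n₂, hn₂, u, hu, rfl⟩ := Set.mem_add.mp hu1
        have hn₁' : n₁ ∈ og A L (og A L {({Sum.inl q} : Multiset (Q ⊕ Fin d))}) := by
          simpa only [Fm.dual, interp] using hn₁
        have hn₂' : n₂ ∈ og A L (og A L {({Sum.inr i} : Multiset (Q ⊕ Fin d))}) := by
          simpa only [Fm.dual, interp] using hn₂
        have hu' := mem_og_sint A L ih hu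
        rw [Fm.dual_dual] at hu'
        have hkey : ({Sum.inl q₁} : Multiset (Q ⊕ Fin d))
            ∈ interp A L (Fm.pos (Sum.inl q₁)) := by
          simp only [interp]
          exact subset_og_og A L _ rfl
        have hD : Der A L (Sum.inl q₁ ::ₘ u) := by
          rw [← add_sing]; exact hu' _ hkey
        have hD2 : Der A L (Sum.inl q ::ₘ Sum.inr i ::ₘ u) := Der.minusE hTu hD
        have hD3 : Der A L ((Sum.inl q ::ₘ u) + n₂) := by
          refine absorb A L hn₂' ?_
          rw [add_sing, Multiset.cons_swap]
          exact hD2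
        have hD4 : Der A L ((u + n₂) + n₁) := by
          refine absorb A L hn₁' ?_
          rw [add_sing]
          rw [show Sum.inl q ::ₘ (u + n₂) = (Sum.inl q ::ₘ u) + n₂ from (Multiset.cons_add _ _ _).symm]
          exact hD3
        rw [show n₁ + (n₂ + u) = (u + n₂) + n₁ by abel]
        exact hD4
      · -- fork
        rw [show ((([Sum.inl q] : List (Q ⊕ Fin d)).map Fm.neg : Multiset (Fm (Q ⊕ Fin d))))
            = {Fm.neg (Sum.inl q)} from rfl, Multiset.singleton_add, sint_cons] at hm
        obtain ⟨n, hn, u, hu, rfl⟩ := Set.mem_add.mp hm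
        have hn' : n ∈ og A L (og A L {({Sum.inl q} : Multiset (Q ⊕ Fin d))}) := by
          simpa only [Fm.dual, interp] using hn
        have hu' := mem_og_sint A L ih hu
        rw [Fm.dual_dual] at hu'
        have hk1 : ({Sum.inl q₁} : Multiset (Q ⊕ Fin d))
            ∈ interp A L (Fm.oplus (Fm.pos (Sum.inl q₁)) (Fm.pos (Sum.inl q₂))) := by
          simp only [interp]
          exact subset_og_og A L _ (Set.mem_union_left _ (subset_og_og A L _ rfl))
        have hk2 : ({Sum.inl q₂} : Multiset (Q ⊕ Fin d))
            ∈ interp A L (Fm.oplus (Fm.pos (Sum.inl q₁)) (Fm.pos (Sum.inl q₂))) := by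
          simp only [interp]
          exact subset_og_og A L _ (Set.mem_union_right _ (subset_og_og A L _ rfl))
        have hD1 : Der A L (Sum.inl q₁ ::ₘ u) := by rw [← add_sing]; exact hu' _ hk1
        have hD2 : Der A L (Sum.inl q₂ ::ₘ u) := by rw [← add_sing]; exact hu' _ hk2
        have hD3 : Der A L (u + {Sum.inl q}) := by
          rw [add_sing]
          exact Der.fork hT hD1 hD2
        have := absorb A L hn' hD3
        rw [add_comm]
        exact this
      · -- split
        rw [show ((([Sum.inl q] : List (Q ⊕ Fin d)).map Fm.neg : Multiset (Fm (Q ⊕ Fin d))))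
            = {Fm.neg (Sum.inl q)} from rfl, Multiset.singleton_add, sint_cons] at hm
        obtain ⟨n, hn, u, hu, rfl⟩ := Set.mem_add.mp hm
        have hn' : n ∈ og A L (og A L {({Sum.inl q} : Multiset (Q ⊕ Fin d))}) := by
          simpa only [Fm.dual, interp] using hn
        have hu' := mem_og_sint A L ih hu
        rw [Fm.dual_dual] at hu'
        simp only [interp] at hu'
        rw [og_triple A L {({Sum.inl q₁} : Multiset (Q ⊕ Fin d))},
          og_triple A L {({Sum.inl q₂} : Multiset (Q ⊕ Fin d))}] at hu'
        have hqhat : ({Sum.inl q} : Multiset (Q ⊕ Fin d))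
            ∈ og A L (og A L {({Sum.inl q₁} : Multiset (Q ⊕ Fin d))}
              + og A L {({Sum.inl q₂} : Multiset (Q ⊕ Fin d))}) := by
          rintro - ⟨a, ha, b, hb, rfl⟩
          have h1 : Der A L (Sum.inl q₁ ::ₘ a) := by
            rw [← add_sing]; exact ha _ rfl
          have h2 : Der A L (Sum.inl q₂ ::ₘ b) := by
            rw [← add_sing]; exact hb _ rfl
          rw [Multiset.singleton_add]
          exact Der.split hT h1 h2
        have hD : Der A L (u + {Sum.inl q}) := hu' _ hqhat
        have := absorb A L hn' hD
        rw [add_comm]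
        exact this

end Phase
section Extract

variable {Q : Type} {d : ℕ}

noncomputable local instance : DecidableEq Q := Classical.decEq _
noncomputable local instance : DecidableEq (Q ⊕ Fin d) := Classical.decEq _

/-- number of state atoms -/
def nS (m : Multiset (Q ⊕ Fin d)) : ℕ := Multiset.countP (fun x => x.isLeft = true) m

lemma nS_cons_inl (q : Q) (m : Multiset (Q ⊕ Fin d)) :
    nS (Sum.inl q ::ₘ m) = nS m + 1 := by
  simp [nS, Multiset.countP_cons]

lemma nS_cons_inr (i : Fin d) (m : Multiset (Q ⊕ Fin d)) :
    nS (Sum.inr i ::ₘ m) = nS m := by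
  simp [nS, Multiset.countP_cons]

lemma nS_cntA (v : Fin d → ℕ) : nS (cntA (Q := Q) v) = 0 := by
  rw [nS, Multiset.countP_eq_zero]
  intro a ha
  rw [cntA] at ha
  rw [Multiset.mem_sum] at ha
  obtain ⟨i, -, hi⟩ := ha
  rw [Multiset.eq_of_mem_replicate hi]
  simp

/-- the target judgement: a lossy deduction tree -/
def J (A : ABVASS Q (Fin d)) (L : Finset Q) (q : Q) (v : Fin d → ℕ) : Prop :=
  ∃ D : DTree Q (Fin d),
    ValidTree (fun c c' => UnaryStep A c c' ∨ LossStep c c') (BinStep A) D ∧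
    D.root = (q, v) ∧ ∀ l ∈ D.leaves, l.1 ∈ L ∧ l.2 = (fun _ => 0)

lemma decomp_cons {q q' : Q} {m : Multiset (Q ⊕ Fin d)} {v : Fin d → ℕ}
    (h : Sum.inl q ::ₘ m = Sum.inl q' ::ₘ cntA v) : q = q' ∧ m = cntA v := by
  rcases Multiset.cons_eq_cons.mp h with ⟨h1, h2⟩ | ⟨hne, cs, h1, h2⟩
  · exact ⟨Sum.inl.inj h1, h2⟩
  · exfalso
    have hmem : (Sum.inl q : Q ⊕ Fin d) ∈ cntA (Q := Q) v := by
      rw [h2]; exact Multiset.mem_cons_self _ _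
    have := Multiset.count_pos.mpr hmem
    rw [count_cntA_inl] at this
    omega

lemma decomp_inr {i : Fin d} {m : Multiset (Q ⊕ Fin d)} {v : Fin d → ℕ}
    (h : (Sum.inr i : Q ⊕ Fin d) ::ₘ m = cntA v) :
    0 < v i ∧ m = cntA (fun j => if j = i then v j - 1 else v j) := by
  have hvi : 0 < v i := by
    rw [← count_cntA_inr v i, ← h, Multiset.count_cons_self]
    omega
  have h2 := cntA_pred (Q := Q) hvi
  rw [h2] at h
  exact ⟨hvi, (Multiset.cons_inj_right _).mp h⟩

theorem extract {A : ABVASS Q (Fin d)} {L : Finset Q} {m : Multiset (Q ⊕ Fin d)}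
    (h : Der A L m) :
    1 ≤ nS m ∧ ∀ q v, m = Sum.inl q ::ₘ cntA v → J A L q v := by
  induction h with
  | @base q hq =>
      constructor
      · show 1 ≤ nS (Sum.inl q ::ₘ 0)
        rw [nS_cons_inl]; omega
      · intro q' v hEq
        obtain ⟨rfl, h0⟩ := decomp_cons (m := 0) hEq
        have hv : v = fun _ => 0 := by
          funext i
          rw [← count_cntA_inr v i, ← h0]
          simp
        refine ⟨DTree.leaf (q, v), ValidTree.leaf _, rfl, ?_⟩
        intro l hl
        rw [DTree.leaves, List.mem_singleton] at hl
        subst hl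
        exact ⟨hq, hv⟩
  | @weak x m' hD ih =>
      constructor
      · rcases x with q'' | i
        · rw [nS_cons_inl]; omega
        · rw [nS_cons_inr]; exact ih.1
      · intro q v hEq
        rcases x with q'' | i
        · exfalso
          have := congrArg nS hEq
          rw [nS_cons_inl, nS_cons_inl, nS_cntA] at this
          have := ih.1
          omega
        · rcases Multiset.cons_eq_cons.mp hEq with ⟨h1, h2⟩ | ⟨hne, cs, h1, h2⟩
          · exact absurd h1 (by simp)
          · obtain ⟨hvi, hcs⟩ := decomp_inr h2.symm
            obtain ⟨D, hDv, hroot, hleaf⟩ := ih.2 q (fun j => if j = i then v j - 1 else v j)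
              (by rw [h1, hcs])
            refine ⟨DTree.node1 (q, v) D, ?_, rfl, ?_⟩
            · refine ValidTree.one ?_ hDv
              right
              rw [hroot]
              refine ⟨rfl, i, ?_, ?_⟩
              · show v i = (if i = i then v i - 1 else v i) + 1
                rw [if_pos rfl]; omega
              · intro j hj
                show v j = if j = i then v j - 1 else v j
                rw [if_neg hj]
            · intro l hl
              exact hleaf l hl
  | @plusE q i q₁ m' hTu hD ih =>
      constructor
      · rw [nS_cons_inl]; omega
      · intro q' v hEq
        obtain ⟨rfl, hm⟩ := decomp_cons hEq
        subst hm
        obtain ⟨D, hDv, hroot, hleaf⟩ := ih.2 q₁ (fun j => if j = i then v j + 1 else v j)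
          (by rw [cntA_succ])
        refine ⟨DTree.node1 (q, v) D, ?_, rfl, fun l hl => hleaf l hl⟩
        refine ValidTree.one ?_ hDv
        left
        rw [hroot]
        refine ⟨unit i, hTu, ?_⟩
        intro j
        simp only [unit]
        by_cases hj : j = i
        · subst hj; simp
        · simp [hj]
  | @minusE q i q₁ m' hTu hD ih =>
      constructor
      · rw [nS_cons_inl]; omega
      · intro q' v hEq
        obtain ⟨rfl, hm⟩ := decomp_cons hEq
        obtain ⟨hvi, hcs⟩ := decomp_inr hm
        obtain ⟨D, hDv, hroot, hleaf⟩ := ih.2 q₁ (fun j => if j = i then v j - 1 else v j)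
          (by rw [hcs])
        refine ⟨DTree.node1 (q, v) D, ?_, rfl, fun l hl => hleaf l hl⟩
        refine ValidTree.one ?_ hDv
        left
        rw [hroot]
        refine ⟨-unit i, hTu, ?_⟩
        intro j
        show ((if j = i then v j - 1 else v j : ℕ) : ℤ) = (v j : ℤ) + (-unit i) j
        simp only [unit, Pi.neg_apply]
        by_cases hj : j = i
        · subst hj
          rw [if_pos rfl, if_pos rfl]
          push_cast [hvi]
          omega
        · rw [if_neg hj, if_neg hj]
          simp
  | @fork q q₁ q₂ m' hT hD1 hD2 ih1 ih2 =>
      constructor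
      · rw [nS_cons_inl]; omega
      · intro q' v hEq
        obtain ⟨rfl, hm⟩ := decomp_cons hEq
        subst hm
        obtain ⟨D1, hDv1, hroot1, hleaf1⟩ := ih1.2 q₁ v rfl
        obtain ⟨D2, hDv2, hroot2, hleaf2⟩ := ih2.2 q₂ v rfl
        refine ⟨DTree.node2 (q, v) D1 D2, ?_, rfl, ?_⟩
        · refine ValidTree.two ?_ hDv1 hDv2
          left
          rw [hroot1, hroot2]
          exact ⟨hT, rfl, rfl⟩
        · intro l hl
          rw [DTree.leaves, List.mem_append] at hl
          rcases hl with hl | hl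
          · exact hleaf1 l hl
          · exact hleaf2 l hl
  | @split q q₁ q₂ m₁ m₂ hT hD1 hD2 ih1 ih2 =>
      constructor
      · rw [nS_cons_inl]; omega
      · intro q' v hEq
        obtain ⟨rfl, hm⟩ := decomp_cons hEq
        have hz : ∀ q'' : Q, m₁.count (Sum.inl q'') = 0 ∧ m₂.count (Sum.inl q'') = 0 := by
          intro q''
          have : (m₁ + m₂).count (Sum.inl q'') = 0 := by
            rw [hm, count_cntA_inl]
          rw [Multiset.count_add] at this
          omega
        have hm₁ : m₁ = cntA (fun i => m₁.count (Sum.inr i)) :=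
          cntA_ext_eq (fun q'' => (hz q'').1)
        have hm₂ : m₂ = cntA (fun i => m₂.count (Sum.inr i)) :=
          cntA_ext_eq (fun q'' => (hz q'').2)
        obtain ⟨D1, hDv1, hroot1, hleaf1⟩ := ih1.2 q₁ _ (by rw [← hm₁])
        obtain ⟨D2, hDv2, hroot2, hleaf2⟩ := ih2.2 q₂ _ (by rw [← hm₂])
        refine ⟨DTree.node2 (q, v) D1 D2, ?_, rfl, ?_⟩
        · refine ValidTree.two ?_ hDv1 hDv2
          right
          rw [hroot1, hroot2]
          refine ⟨hT, ?_⟩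
          funext i
          show v i = m₁.count (Sum.inr i) + m₂.count (Sum.inr i)
          rw [← Multiset.count_add, hm, count_cntA_inr]
        · intro l hl
          rw [DTree.leaves, List.mem_append] at hl
          rcases hl with hl | hl
          · exact hleaf1 l hl
          · exact hleaf2 l hl

end Extract

section Forward

open Pointwise

variable {Q : Type} {d : ℕ}

/-- the `?Q_ℓ` context -/
def QM (L : Finset Q) : Multiset (Fm (Q ⊕ Fin d)) :=
  Multiset.map (fun ql => Fm.quest (Fm.pos (Sum.inl ql))) L.val

lemma llwt_weakAdd {α : Type} {T : Set (LAxiom α)} (Δ : Multiset (Fm α)) {Γ}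
    (h : LLWT T Γ) : LLWT T (Δ + Γ) := by
  induction Δ using Multiset.induction with
  | empty => simpa
  | cons a s ih => rw [Multiset.cons_add]; exact LLWT.weak a ih

lemma llwt_contractQ {α : Type} {T : Set (LAxiom α)} :
    ∀ S : Multiset (Fm α), (∀ g ∈ S, ∃ h, g = Fm.quest h) →
      ∀ Γ, LLWT T (S + S + Γ) → LLWT T (S + Γ) := by
  intro S
  induction S using Multiset.induction with
  | empty => intro _ Γ h; simpa using h
  | cons g S' ih =>
      intro hS Γ h
      obtain ⟨f, hf⟩ := hS g (Multiset.mem_cons_self _ _)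
      subst hf
      have h1 : LLWT T (Fm.quest f ::ₘ Fm.quest f ::ₘ (S' + S' + Γ)) := by
        rw [show Fm.quest f ::ₘ Fm.quest f ::ₘ (S' + S' + Γ)
            = (Fm.quest f ::ₘ S') + (Fm.quest f ::ₘ S') + Γ from by
          simp only [← Multiset.singleton_add]; abel]
        exact h
      have h2 := LLWT.qC f h1
      have h3 : LLWT T (S' + S' + (Fm.quest f ::ₘ Γ)) := by
        rw [show S' + S' + (Fm.quest f ::ₘ Γ) = Fm.quest f ::ₘ (S' + S' + Γ) from by
          simp only [← Multiset.singleton_add]; abel]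
        exact h2
      have h4 := ih (fun g hg => hS g (Multiset.mem_cons_of_mem hg)) _ h3
      rw [show (Fm.quest f ::ₘ S') + Γ = S' + (Fm.quest f ::ₘ Γ) from by
        simp only [← Multiset.singleton_add]; abel]
      exact h4

lemma QM_quests (L : Finset Q) : ∀ g ∈ QM (d := d) L, ∃ h, g = Fm.quest h := by
  intro g hg
  rw [QM, Multiset.mem_map] at hg
  obtain ⟨ql, -, rfl⟩ := hg
  exact ⟨_, rfl⟩

variable (A : ABVASS Q (Fin d)) (L : Finset Q)

theorem forward (hord : Ordinary A) :
    ∀ {D : DTree Q (Fin d)},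
      ValidTree (fun c c' => UnaryStep A c c' ∨ LossStep c c') (BinStep A) D →
      (∀ l ∈ D.leaves, l.1 ∈ L ∧ l.2 = (fun _ => 0)) →
      LLWT (thAx A) (theta D.root.1 D.root.2 + QM L) := by
  intro D hD
  induction hD with
  | leaf c =>
      intro hleaf
      obtain ⟨hql, hv0⟩ := hleaf c (by rw [DTree.leaves]; exact List.mem_singleton_self c)
      show LLWT (thAx A) (theta c.1 c.2 + QM L)
      have hc0 : cntF (Q := Q) (d := d) (fun _ => 0) = 0 := by
        rw [cntF]; simp
      obtain ⟨rest, hrest⟩ := Multiset.exists_cons_of_mem (Finset.mem_val.mpr hql)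
      have hinit : LLWT (thAx A) {Fm.pos (Sum.inl c.1), Fm.neg (Sum.inl c.1)} :=
        LLWT.init (Fm.pos (Sum.inl c.1))
      have h2 : LLWT (thAx A)
          (Fm.quest (Fm.pos (Sum.inl c.1)) ::ₘ {Fm.neg (Sum.inl c.1)}) :=
        LLWT.qD _ hinit
      have h3 := llwt_weakAdd
        (Multiset.map (fun ql => Fm.quest (Fm.pos (Sum.inl ql))) rest) h2
      rw [show theta c.1 c.2 + QM L
          = Multiset.map (fun ql => Fm.quest (Fm.pos (Sum.inl ql))) rest
            + (Fm.quest (Fm.pos (Sum.inl c.1)) ::ₘ {Fm.neg (Sum.inl c.1)}) from by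
        rw [theta_eq, hv0, hc0, QM, hrest, Multiset.map_cons]
        simp only [← Multiset.singleton_add]
        abel]
      exact h3
  | @one c t hstep hvt ih =>
      intro hleaf
      have IH := ih (fun l hl => hleaf l (by rw [DTree.leaves]; exact hl))
      show LLWT (thAx A) (theta c.1 c.2 + QM L)
      rcases hstep with ⟨u, hTu, hu⟩ | ⟨hq, i, hvi, hvj⟩
      · obtain ⟨i, hunit | hunit⟩ := hord _ hTu
        · subst hunit
          have hveq : t.root.2 = fun j => if j = i then c.2 j + 1 else c.2 j := by
            funext j
            have := hu j
            simp only [unit] at this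
            by_cases hj : j = i
            · subst hj
              rw [if_pos rfl] at this ⊢
              exact_mod_cast this
            · rw [if_neg hj] at this ⊢
              rw [add_zero] at this
              exact_mod_cast this
          have hax : (Fm.tensor (Fm.pos (Sum.inl t.root.1)) (Fm.pos (Sum.inr i)),
              ([Sum.inl c.1] : List (Q ⊕ Fin d))) ∈ thAx A := by
            simp only [thAx, Set.mem_setOf_eq]
            exact Or.inl ⟨c.1, i, t.root.1, hTu, rfl⟩
          have hprem : LLWT (thAx A)
              ((Fm.tensor (Fm.pos (Sum.inl t.root.1)) (Fm.pos (Sum.inr i))).dual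
                ::ₘ (cntF c.2 + QM L)) := by
            show LLWT (thAx A)
              (Fm.parr (Fm.neg (Sum.inl t.root.1)) (Fm.neg (Sum.inr i))
                ::ₘ (cntF c.2 + QM L))
            refine LLWT.parr _ _ ?_
            rw [show Fm.neg (Sum.inl t.root.1) ::ₘ Fm.neg (Sum.inr i)
                ::ₘ (cntF c.2 + QM L) = theta t.root.1 t.root.2 + QM L from by
              rw [theta_eq, hveq, cntF_succ]
              simp only [← Multiset.singleton_add]; abel]
            exact IH
          have hd := LLWT.dcut hax hprem
          rw [show theta c.1 c.2 + QM L
              = ((([Sum.inl c.1] : List (Q ⊕ Fin d)).map Fm.neg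
                  : Multiset (Fm (Q ⊕ Fin d)))) + (cntF c.2 + QM L) from by
            rw [theta_eq,
              show ((([Sum.inl c.1] : List (Q ⊕ Fin d)).map Fm.neg
                : Multiset (Fm (Q ⊕ Fin d)))) = {Fm.neg (Sum.inl c.1)} from rfl]
            simp only [← Multiset.singleton_add]; abel]
          exact hd
        · subst hunit
          have hveq : c.2 = fun j => if j = i then t.root.2 j + 1 else t.root.2 j := by
            funext j
            have := hu j
            simp only [unit, Pi.neg_apply] at this
            by_cases hj : j = i
            · subst hj
              rw [if_pos rfl] at this ⊢
              omega
            · rw [if_neg hj] at this ⊢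
              rw [neg_zero, add_zero] at this
              exact_mod_cast this.symm
          have hax : (Fm.pos (Sum.inl t.root.1),
              ([Sum.inl c.1, Sum.inr i] : List (Q ⊕ Fin d))) ∈ thAx A := by
            simp only [thAx, Set.mem_setOf_eq]
            exact Or.inr (Or.inl ⟨c.1, i, t.root.1, hTu, rfl⟩)
          have hprem : LLWT (thAx A)
              ((Fm.pos (Sum.inl t.root.1)).dual ::ₘ (cntF t.root.2 + QM L)) := by
            show LLWT (thAx A)
              (Fm.neg (Sum.inl t.root.1) ::ₘ (cntF t.root.2 + QM L))
            rw [show Fm.neg (Sum.inl t.root.1) ::ₘ (cntF t.root.2 + QM L)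
                = theta t.root.1 t.root.2 + QM L from by
              rw [theta_eq]
              simp only [← Multiset.singleton_add]; abel]
            exact IH
          have hd := LLWT.dcut hax hprem
          rw [show theta c.1 c.2 + QM L
              = ((([Sum.inl c.1, Sum.inr i] : List (Q ⊕ Fin d)).map Fm.neg
                  : Multiset (Fm (Q ⊕ Fin d)))) + (cntF t.root.2 + QM L) from by
            rw [theta_eq, hveq, cntF_succ,
              show ((([Sum.inl c.1, Sum.inr i] : List (Q ⊕ Fin d)).map Fm.neg
                : Multiset (Fm (Q ⊕ Fin d))))
                = Fm.neg (Sum.inl c.1) ::ₘ {Fm.neg (Sum.inr i)} from rfl]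
            simp only [← Multiset.singleton_add]; abel]
          exact hd
      · -- loss step
        have h1 := LLWT.weak (Fm.neg (Sum.inr i)) IH
        have hveq : c.2 = fun j => if j = i then t.root.2 j + 1 else t.root.2 j := by
          funext j
          by_cases hj : j = i
          · subst hj; rw [if_pos rfl]; exact hvi
          · rw [if_neg hj]; exact hvj j hj
        rw [show theta c.1 c.2 + QM L
            = Fm.neg (Sum.inr i) ::ₘ (theta t.root.1 t.root.2 + QM L) from by
          rw [theta_eq, theta_eq, hveq, cntF_succ, ← hq]
          simp only [← Multiset.singleton_add]; abel]
        exact h1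
  | @two c t₁ t₂ hstep hv1 hv2 ih1 ih2 =>
      intro hleaf
      have hleaf1 : ∀ l ∈ t₁.leaves, l.1 ∈ L ∧ l.2 = (fun _ => 0) := fun l hl =>
        hleaf l (by rw [DTree.leaves, List.mem_append]; exact Or.inl hl)
      have hleaf2 : ∀ l ∈ t₂.leaves, l.1 ∈ L ∧ l.2 = (fun _ => 0) := fun l hl =>
        hleaf l (by rw [DTree.leaves, List.mem_append]; exact Or.inr hl)
      have IH1 := ih1 hleaf1
      have IH2 := ih2 hleaf2
      show LLWT (thAx A) (theta c.1 c.2 + QM L)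
      rcases hstep with ⟨hT, h1, h2⟩ | ⟨hT, hsum⟩
      · -- fork
        have hax : (Fm.oplus (Fm.pos (Sum.inl t₁.root.1)) (Fm.pos (Sum.inl t₂.root.1)),
            ([Sum.inl c.1] : List (Q ⊕ Fin d))) ∈ thAx A := by
          simp only [thAx, Set.mem_setOf_eq]
          exact Or.inr (Or.inr (Or.inl ⟨c.1, t₁.root.1, t₂.root.1, hT, rfl⟩))
        have hprem : LLWT (thAx A)
            ((Fm.oplus (Fm.pos (Sum.inl t₁.root.1)) (Fm.pos (Sum.inl t₂.root.1))).dual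
              ::ₘ (cntF c.2 + QM L)) := by
          show LLWT (thAx A)
            (Fm.wth (Fm.neg (Sum.inl t₁.root.1)) (Fm.neg (Sum.inl t₂.root.1))
              ::ₘ (cntF c.2 + QM L))
          refine LLWT.wth _ _ ?_ ?_
          · rw [show Fm.neg (Sum.inl t₁.root.1) ::ₘ (cntF c.2 + QM L)
                = theta t₁.root.1 t₁.root.2 + QM L from by
              rw [theta_eq, h1]
              simp only [← Multiset.singleton_add]; abel]
            exact IH1
          · rw [show Fm.neg (Sum.inl t₂.root.1) ::ₘ (cntF c.2 + QM L)
                = theta t₂.root.1 t₂.root.2 + QM L from by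
              rw [theta_eq, h2]
              simp only [← Multiset.singleton_add]; abel]
            exact IH2
        have hd := LLWT.dcut hax hprem
        rw [show theta c.1 c.2 + QM L
            = ((([Sum.inl c.1] : List (Q ⊕ Fin d)).map Fm.neg
                : Multiset (Fm (Q ⊕ Fin d)))) + (cntF c.2 + QM L) from by
          rw [theta_eq,
            show ((([Sum.inl c.1] : List (Q ⊕ Fin d)).map Fm.neg
              : Multiset (Fm (Q ⊕ Fin d)))) = {Fm.neg (Sum.inl c.1)} from rfl]
          simp only [← Multiset.singleton_add]; abel]
        exact hd
      · -- split
        have hIH1 : LLWT (thAx A)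
            (Fm.neg (Sum.inl t₁.root.1) ::ₘ (cntF t₁.root.2 + QM L)) := by
          rw [show Fm.neg (Sum.inl t₁.root.1) ::ₘ (cntF t₁.root.2 + QM L)
              = theta t₁.root.1 t₁.root.2 + QM L from by
            rw [theta_eq]; simp only [← Multiset.singleton_add]; abel]
          exact IH1
        have hIH2 : LLWT (thAx A)
            (Fm.neg (Sum.inl t₂.root.1) ::ₘ (cntF t₂.root.2 + QM L)) := by
          rw [show Fm.neg (Sum.inl t₂.root.1) ::ₘ (cntF t₂.root.2 + QM L)
              = theta t₂.root.1 t₂.root.2 + QM L from by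
            rw [theta_eq]; simp only [← Multiset.singleton_add]; abel]
          exact IH2
        have htens := LLWT.tensor _ _ hIH1 hIH2
        have hcF : cntF (Q := Q) c.2 = cntF t₁.root.2 + cntF t₂.root.2 := by
          rw [hsum]
          exact cntF_add _ _
        have hcon : LLWT (thAx A) (QM L +
            (Fm.tensor (Fm.neg (Sum.inl t₁.root.1)) (Fm.neg (Sum.inl t₂.root.1))
              ::ₘ (cntF t₁.root.2 + cntF t₂.root.2))) := by
          refine llwt_contractQ (QM L) (QM_quests L) _ ?_
          rw [show QM L + QM L +
              (Fm.tensor (Fm.neg (Sum.inl t₁.root.1)) (Fm.neg (Sum.inl t₂.root.1))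
                ::ₘ (cntF t₁.root.2 + cntF t₂.root.2))
              = Fm.tensor (Fm.neg (Sum.inl t₁.root.1)) (Fm.neg (Sum.inl t₂.root.1))
                ::ₘ ((cntF t₁.root.2 + QM L) + (cntF t₂.root.2 + QM L)) from by
            simp only [← Multiset.singleton_add]; abel]
          exact htens
        have hax : (Fm.parr (Fm.pos (Sum.inl t₁.root.1)) (Fm.pos (Sum.inl t₂.root.1)),
            ([Sum.inl c.1] : List (Q ⊕ Fin d))) ∈ thAx A := by
          simp only [thAx, Set.mem_setOf_eq]
          exact Or.inr (Or.inr (Or.inr ⟨c.1, t₁.root.1, t₂.root.1, hT, rfl⟩))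
        have hprem : LLWT (thAx A)
            ((Fm.parr (Fm.pos (Sum.inl t₁.root.1)) (Fm.pos (Sum.inl t₂.root.1))).dual
              ::ₘ (cntF c.2 + QM L)) := by
          show LLWT (thAx A)
            (Fm.tensor (Fm.neg (Sum.inl t₁.root.1)) (Fm.neg (Sum.inl t₂.root.1))
              ::ₘ (cntF c.2 + QM L))
          rw [show Fm.tensor (Fm.neg (Sum.inl t₁.root.1)) (Fm.neg (Sum.inl t₂.root.1))
              ::ₘ (cntF c.2 + QM L)
              = QM L + (Fm.tensor (Fm.neg (Sum.inl t₁.root.1))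
                  (Fm.neg (Sum.inl t₂.root.1))
                ::ₘ (cntF t₁.root.2 + cntF t₂.root.2)) from by
            rw [hcF]
            simp only [← Multiset.singleton_add]; abel]
          exact hcon
        have hd := LLWT.dcut hax hprem
        rw [show theta c.1 c.2 + QM L
            = ((([Sum.inl c.1] : List (Q ⊕ Fin d)).map Fm.neg
                : Multiset (Fm (Q ⊕ Fin d)))) + (cntF c.2 + QM L) from by
          rw [theta_eq,
            show ((([Sum.inl c.1] : List (Q ⊕ Fin d)).map Fm.neg
              : Multiset (Fm (Q ⊕ Fin d)))) = {Fm.neg (Sum.inl c.1)} from rfl]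
          simp only [← Multiset.singleton_add]; abel]
        exact hd

/-- membership of the canonical element in the interpretation of `θ(q,v), ?Q_ℓ` -/
lemma map_inr_mem_sint : ∀ s : Multiset (Fin d),
    ((s.map Sum.inr : Multiset (Q ⊕ Fin d)))
      ∈ sint A L (s.map fun i => Fm.neg (Sum.inr i)) := by
  intro s
  induction s using Multiset.induction with
  | empty =>
      show _ ∈ sint A L 0
      rw [sint_zero]
      rfl
  | cons i s ih =>
      rw [Multiset.map_cons, Multiset.map_cons, sint_cons]
      refine ⟨{Sum.inr i}, ?_, s.map Sum.inr, ih, ?_⟩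
      · show _ ∈ interp A L (Fm.pos (Sum.inr i))
        simp only [interp]
        exact subset_og_og A L _ rfl
      · simp [Multiset.singleton_add]

lemma cntA_mem_sint (v : Fin d → ℕ) : cntA (Q := Q) v ∈ sint A L (cntF v) := by
  have h1 : cntA (Q := Q) v
      = ((Finset.univ : Finset (Fin d)).sum fun i => Multiset.replicate (v i) i).map
          Sum.inr := by
    rw [map_finsetSum]
    exact Finset.sum_congr rfl fun i _ => by rw [Multiset.map_replicate]
  have h2 : cntF (Q := Q) v
      = ((Finset.univ : Finset (Fin d)).sum fun i => Multiset.replicate (v i) i).map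
          fun i => Fm.neg (Sum.inr i) := by
    rw [map_finsetSum]
    exact Finset.sum_congr rfl fun i _ => by rw [Multiset.map_replicate]
  rw [h1, h2]
  exact map_inr_mem_sint A L _

lemma zero_mem_sint_QM : (0 : Multiset (Q ⊕ Fin d)) ∈ sint A L (QM L) := by
  rw [QM]
  have : ∀ S : Multiset Q, (∀ x ∈ S, x ∈ L) →
      (0 : Multiset (Q ⊕ Fin d))
        ∈ sint A L (S.map fun ql => Fm.quest (Fm.pos (Sum.inl ql))) := by
    intro S
    induction S using Multiset.induction with
    | empty =>
        intro _
        rw [Multiset.map_zero, sint_zero]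
        rfl
    | cons a S' ih =>
        intro hmem
        rw [Multiset.map_cons, sint_cons]
        refine ⟨0, ?_, 0, ih fun x hx => hmem x (Multiset.mem_cons_of_mem hx), rfl⟩
        show _ ∈ interp A L (Fm.bang (Fm.neg (Sum.inl a)))
        simp only [interp]
        refine subset_og_og A L _ ⟨rfl, ?_⟩
        intro x hx
        rw [Set.mem_singleton_iff] at hx
        subst hx
        rw [zero_add]
        exact Der.base (hmem a (Multiset.mem_cons_self _ _))
  exact this L.val fun x hx => Finset.mem_val.mp hx

lemma main_elem_mem (q : Q) (v : Fin d → ℕ) :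
    (Sum.inl q ::ₘ cntA v) ∈ sint A L (theta q v + QM L) := by
  rw [sint_add, theta_eq, sint_cons]
  refine ⟨{Sum.inl q} + cntA v, ⟨{Sum.inl q}, ?_, cntA v, cntA_mem_sint A L v, rfl⟩,
    0, zero_mem_sint_QM A L, ?_⟩
  · show _ ∈ interp A L (Fm.pos (Sum.inl q))
    simp only [interp]
    exact subset_og_og A L _ rfl
  · simp [Multiset.singleton_add]

end Forward

end AbvProof

/-- For an ordinary ABVASS `A` (no full zero tests) and all configurations
`(q, v)`, the root judgement `A, Q_ℓ ▷_ℓ q, v` holds under the lossy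
semantics iff the sequent `⊢ θ(q, v), ?Q_ℓ` is provable in LLW+T(A). -/
theorem abvass_lossy_reach_iff_llwt {Q : Type} [Fintype Q] {d : ℕ}
    (A : ABVASS Q (Fin d)) (hz : A.Tz = ∅) (hord : Ordinary A)
    (Qℓ : Finset Q) (q : Q) (v : Fin d → ℕ) :
    (∃ D : DTree Q (Fin d),
        ValidTree (fun c c' => UnaryStep A c c' ∨ LossStep c c') (BinStep A) D ∧
        D.root = (q, v) ∧
        ∀ l ∈ D.leaves, l.1 ∈ Qℓ ∧ l.2 = (fun _ => 0)) ↔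
    LLWT (thAx A)
      (theta q v +
        Multiset.map (fun ql => Fm.quest (Fm.pos (Sum.inl ql))) Qℓ.val) := by
  constructor
  · rintro ⟨D, hD, hroot, hleaf⟩
    have := AbvProof.forward A Qℓ hord hD hleaf
    rw [hroot] at this
    exact this
  · intro h
    have hel := AbvProof.main_elem_mem A Qℓ q v
    have hDer := AbvProof.soundness A Qℓ h _ hel
    exact (AbvProof.extract hDer).2 q v rfl
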